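/- Let (φ₀, φ₁) be probability densities on a measure space with the same support, differing on a set of positive measure, with both Kullback–Leibler divergences KL(φ₀‖φ₁) and KL(φ₁‖φ₀) finite. Let α* = argmax_{α∈(0,1)} D_α(φ₀‖φ₁), let φ_{α*} = φ₀^{1−α*} φ₁^{α*} e^{D_{α*}(φ₀‖φ₁)} be the tilted density, and let l = φ₀/φ₁. Then E_{Y∼φ_{α*}}[log l(Y)] = 0. -/

import Mathlib

open MeasureTheory Real

/-- **The tilted log-likelihood ratio has mean zero** (Lemma 1).
If `α*` maximizes the Chernoff α-divergence on `(0,1)` and `φ_{α*}` is the tilted density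
`φ₀^{1−α*} φ₁^{α*} e^{D_{α*}(φ₀‖φ₁)}`, then `E_{Y ∼ φ_{α*}}[log(φ₀(Y)/φ₁(Y))] = 0`. -/
theorem stmt_5 {Ω : Type} [MeasurableSpace Ω] (μ : Measure Ω)
    (φ₀ φ₁ : Ω → ℝ)
    (h₀nn : ∀ x, 0 ≤ φ₀ x) (h₁nn : ∀ x, 0 ≤ φ₁ x)
    (h₀m : Measurable φ₀) (h₁m : Measurable φ₁)
    (h₀d : ∫ x, φ₀ x ∂μ = 1) (h₁d : ∫ x, φ₁ x ∂μ = 1)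
    -- same support
    (hsupp : ∀ x, 0 < φ₀ x ↔ 0 < φ₁ x)
    -- differing on a set of positive measure
    (hdiff : μ {x | φ₀ x ≠ φ₁ x} ≠ 0)
    -- Kullback–Leibler divergences finite in both directions
    (hKL₀ : Integrable (fun x => φ₀ x * Real.log (φ₀ x / φ₁ x)) μ)
    (hKL₁ : Integrable (fun x => φ₁ x * Real.log (φ₁ x / φ₀ x)) μ)
    -- `α*` maximizes the Chernoff α-divergence over (0,1)
    (αs : ℝ) (hαs : αs ∈ Set.Ioo (0 : ℝ) 1)
    (hmax : IsMaxOn (fun α : ℝ =>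
        -Real.log (∫ x, φ₀ x ^ (1 - α) * φ₁ x ^ α ∂μ)) (Set.Ioo 0 1) αs) :
    ∫ x, (φ₀ x ^ (1 - αs) * φ₁ x ^ αs *
        Real.exp (-Real.log (∫ y, φ₀ y ^ (1 - αs) * φ₁ y ^ αs ∂μ))) *
      Real.log (φ₀ x / φ₁ x) ∂μ = 0 := by
  obtain ⟨hαs0, hαs1⟩ := hαs
  -- F and F'
  set F : ℝ → Ω → ℝ := fun α x => φ₀ x ^ (1 - α) * φ₁ x ^ α with hF
  set F' : ℝ → Ω → ℝ := fun α x => φ₀ x ^ (1 - α) * φ₁ x ^ α *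
      (Real.log (φ₁ x) - Real.log (φ₀ x)) with hF'
  -- integrability of densities
  have hint₀ : Integrable φ₀ μ := by
    by_contra h; rw [integral_undef h] at h₀d; norm_num at h₀d
  have hint₁ : Integrable φ₁ μ := by
    by_contra h; rw [integral_undef h] at h₁d; norm_num at h₁d
  -- pointwise bound on F
  have hFnn : ∀ α x, 0 ≤ F α x := fun α x =>
    mul_nonneg (Real.rpow_nonneg (h₀nn x) _) (Real.rpow_nonneg (h₁nn x) _)
  have hFle : ∀ α ∈ Set.Ioo (0:ℝ) 1, ∀ x, F α x ≤ φ₀ x + φ₁ x := by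
    intro α hα x
    show φ₀ x ^ (1 - α) * φ₁ x ^ α ≤ φ₀ x + φ₁ x
    rcases le_total (φ₀ x) (φ₁ x) with h | h
    · calc φ₀ x ^ (1 - α) * φ₁ x ^ α ≤ φ₁ x ^ (1 - α) * φ₁ x ^ α :=
            mul_le_mul_of_nonneg_right
              (Real.rpow_le_rpow (h₀nn x) h (by linarith [hα.2]))
              (Real.rpow_nonneg (h₁nn x) _)
        _ = φ₁ x := by
            rw [← Real.rpow_add' (h₁nn x) (by norm_num)]
            simp
        _ ≤ φ₀ x + φ₁ x := by linarith [h₀nn x]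
    · calc φ₀ x ^ (1 - α) * φ₁ x ^ α ≤ φ₀ x ^ (1 - α) * φ₀ x ^ α :=
            mul_le_mul_of_nonneg_left
              (Real.rpow_le_rpow (h₁nn x) h (le_of_lt hα.1))
              (Real.rpow_nonneg (h₀nn x) _)
        _ = φ₀ x := by
            rw [← Real.rpow_add' (h₀nn x) (by norm_num)]
            simp
        _ ≤ φ₀ x + φ₁ x := by linarith [h₁nn x]
  have hFmeas : ∀ α, Measurable (F α) := fun α =>
    (h₀m.pow_const _).mul (h₁m.pow_const _)
  have hFint : ∀ α ∈ Set.Ioo (0:ℝ) 1, Integrable (F α) μ := by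
    intro α hα
    refine (hint₀.add hint₁).mono (hFmeas α).aestronglyMeasurable ?_
    filter_upwards with x
    simp only [Pi.add_apply, Real.norm_eq_abs]
    rw [abs_of_nonneg (hFnn α x), abs_of_nonneg (add_nonneg (h₀nn x) (h₁nn x))]
    exact hFle α hα x
  -- g and positivity
  set g : ℝ → ℝ := fun α => ∫ x, F α x ∂μ with hg
  have hgpos : 0 < g αs := by
    rw [hg]
    rw [integral_pos_iff_support_of_nonneg (hFnn αs) (hFint αs ⟨hαs0, hαs1⟩)]
    have hsub : Function.support φ₀ ⊆ Function.support (F αs) := by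
      intro x hx
      have h0 : 0 < φ₀ x := lt_of_le_of_ne (h₀nn x) (Ne.symm hx)
      have h1 : 0 < φ₁ x := (hsupp x).mp h0
      exact ne_of_gt (mul_pos (Real.rpow_pos_of_pos h0 _) (Real.rpow_pos_of_pos h1 _))
    refine lt_of_lt_of_le ?_ (measure_mono hsub)
    by_contra h
    push_neg at h
    have h0 : μ (Function.support φ₀) = 0 := le_antisymm h zero_le
    have : ∫ x, φ₀ x ∂μ = 0 := by
      refine integral_eq_zero_of_ae ?_
      rw [Filter.EventuallyEq, ae_iff]
      simpa [Function.support] using h0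
    rw [this] at h₀d; norm_num at h₀d
  -- bound for derivative
  set bound : Ω → ℝ := fun x => (φ₀ x + φ₁ x) * |Real.log (φ₀ x / φ₁ x)| with hbound
  have hbound_int : Integrable bound μ := by
    have h1 : Integrable (fun x => |φ₀ x * Real.log (φ₀ x / φ₁ x)| +
        |φ₁ x * Real.log (φ₁ x / φ₀ x)|) μ := hKL₀.abs.add hKL₁.abs
    refine h1.congr ?_
    filter_upwards with x
    have habs : |Real.log (φ₁ x / φ₀ x)| = |Real.log (φ₀ x / φ₁ x)| := by
      rw [← inv_div (φ₀ x) (φ₁ x), Real.log_inv, abs_neg]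
    show _ = (φ₀ x + φ₁ x) * |Real.log (φ₀ x / φ₁ x)|
    rw [abs_mul, abs_mul, habs, abs_of_nonneg (h₀nn x), abs_of_nonneg (h₁nn x)]
    ring
  -- ε for the ball
  set ε : ℝ := min αs (1 - αs) with hε
  have hε_pos : 0 < ε := lt_min hαs0 (by linarith)
  have hball : Metric.ball αs ε ⊆ Set.Ioo (0:ℝ) 1 := by
    intro α hα
    rw [Metric.mem_ball, Real.dist_eq, abs_lt] at hα
    constructor
    · have := min_le_left αs (1 - αs); linarith [hα.1]
    · have := min_le_right αs (1 - αs); linarith [hα.2]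
  -- derivative under integral
  have hkey : Integrable (F' αs) μ ∧
      HasDerivAt (fun α => ∫ x, F α x ∂μ) (∫ x, F' αs x ∂μ) αs := by
    apply hasDerivAt_integral_of_dominated_loc_of_deriv_le (Metric.ball_mem_nhds αs hε_pos)
    · filter_upwards with α
      exact (hFmeas α).aestronglyMeasurable
    · exact hFint αs ⟨hαs0, hαs1⟩
    · exact ((hFmeas αs).mul ((h₁m.log).sub (h₀m.log))).aestronglyMeasurable
    · filter_upwards with x
      intro α hα
      have hα' := hball hα
      rw [Real.norm_eq_abs, hF', abs_mul, abs_of_nonneg (hFnn α x)]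
      have habs : |Real.log (φ₁ x) - Real.log (φ₀ x)| = |Real.log (φ₀ x / φ₁ x)| := by
        by_cases h0 : 0 < φ₀ x
        · have h1 : 0 < φ₁ x := (hsupp x).mp h0
          rw [Real.log_div (ne_of_gt h0) (ne_of_gt h1), abs_sub_comm]
        · have h0' : φ₀ x = 0 := le_antisymm (not_lt.mp h0) (h₀nn x)
          have h1' : φ₁ x = 0 := by
            by_contra h
            exact h0 ((hsupp x).mpr (lt_of_le_of_ne (h₁nn x) (Ne.symm h)))
          simp [h0', h1']
      rw [habs]
      exact mul_le_mul_of_nonneg_right (hFle α hα' x) (abs_nonneg _)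
    · exact hbound_int
    · filter_upwards with x
      intro α hα
      have hα' := hball hα
      by_cases h0 : 0 < φ₀ x
      · have h1 : 0 < φ₁ x := (hsupp x).mp h0
        have hc : 0 < φ₁ x / φ₀ x := div_pos h1 h0
        have hd : HasDerivAt (fun β => φ₀ x * (φ₁ x / φ₀ x) ^ β)
            (φ₀ x * ((φ₁ x / φ₀ x) ^ α * Real.log (φ₁ x / φ₀ x))) α :=
          ((Real.hasStrictDerivAt_const_rpow hc α).hasDerivAt).const_mul (φ₀ x)
        have hfun : (fun β => φ₀ x * (φ₁ x / φ₀ x) ^ β) = fun β => F β x := by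
          funext β
          show φ₀ x * (φ₁ x / φ₀ x) ^ β = φ₀ x ^ (1 - β) * φ₁ x ^ β
          have hβ0 : φ₀ x ^ β ≠ 0 := (Real.rpow_pos_of_pos h0 β).ne'
          rw [Real.div_rpow (le_of_lt h1) (le_of_lt h0),
            Real.rpow_sub h0, Real.rpow_one]
          field_simp
        have hval : φ₀ x * ((φ₁ x / φ₀ x) ^ α * Real.log (φ₁ x / φ₀ x)) = F' α x := by
          show _ = φ₀ x ^ (1 - α) * φ₁ x ^ α * (Real.log (φ₁ x) - Real.log (φ₀ x))
          have hα0 : φ₀ x ^ α ≠ 0 := (Real.rpow_pos_of_pos h0 α).ne'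
          rw [Real.div_rpow (le_of_lt h1) (le_of_lt h0),
            Real.log_div (ne_of_gt h1) (ne_of_gt h0), Real.rpow_sub h0, Real.rpow_one]
          field_simp
        rw [hfun, hval] at hd
        exact hd
      · have h0' : φ₀ x = 0 := le_antisymm (not_lt.mp h0) (h₀nn x)
        have hzero : ∀ β ∈ Set.Ioo (0:ℝ) 1, F β x = 0 := by
          intro β hβ
          show φ₀ x ^ (1 - β) * φ₁ x ^ β = 0
          rw [h0', Real.zero_rpow (by linarith [hβ.2] : (1:ℝ) - β ≠ 0), zero_mul]
        have hd : HasDerivAt (fun β => F β x) 0 α := by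
          have : HasDerivAt (fun _ : ℝ => (0:ℝ)) 0 α := hasDerivAt_const α 0
          refine this.congr_of_eventuallyEq ?_
          filter_upwards [isOpen_Ioo.mem_nhds hα'] with β hβ
          exact hzero β hβ
        have : F' α x = 0 := by
          show φ₀ x ^ (1 - α) * φ₁ x ^ α * _ = 0
          rw [h0', Real.zero_rpow (by linarith [hα'.2] : (1:ℝ) - α ≠ 0), zero_mul,
            zero_mul]
        rw [this]
        exact hd
  -- derivative of -log g at αs is zero
  have hglog : HasDerivAt (fun α => -Real.log (g α)) (-((∫ x, F' αs x ∂μ) / g αs)) αs :=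
    (hkey.2.log (ne_of_gt hgpos)).neg
  have hlocmax : IsLocalMax (fun α => -Real.log (g α)) αs :=
    hmax.isLocalMax (isOpen_Ioo.mem_nhds ⟨hαs0, hαs1⟩)
  have hderiv0 : -((∫ x, F' αs x ∂μ) / g αs) = 0 := hlocmax.hasDerivAt_eq_zero hglog
  have hI0 : ∫ x, F' αs x ∂μ = 0 := by
    have h : (∫ x, F' αs x ∂μ) / g αs = 0 := by linarith
    exact (div_eq_zero_iff.mp h).resolve_right (ne_of_gt hgpos)
  -- conclude
  have hrw : ∀ x, (φ₀ x ^ (1 - αs) * φ₁ x ^ αs *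
      Real.exp (-Real.log (∫ y, φ₀ y ^ (1 - αs) * φ₁ y ^ αs ∂μ))) *
      Real.log (φ₀ x / φ₁ x) =
      Real.exp (-Real.log (g αs)) *
        (-(φ₀ x ^ (1 - αs) * φ₁ x ^ αs *
          (Real.log (φ₁ x) - Real.log (φ₀ x)))) := by
    intro x
    by_cases h0 : 0 < φ₀ x
    · have h1 : 0 < φ₁ x := (hsupp x).mp h0
      rw [Real.log_div (ne_of_gt h0) (ne_of_gt h1)]
      ring
    · have h0' : φ₀ x = 0 := le_antisymm (not_lt.mp h0) (h₀nn x)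
      rw [h0', Real.zero_rpow (by linarith : (1:ℝ) - αs ≠ 0)]
      ring
  calc ∫ x, (φ₀ x ^ (1 - αs) * φ₁ x ^ αs *
        Real.exp (-Real.log (∫ y, φ₀ y ^ (1 - αs) * φ₁ y ^ αs ∂μ))) *
      Real.log (φ₀ x / φ₁ x) ∂μ
      = ∫ x, Real.exp (-Real.log (g αs)) * (-(F' αs x)) ∂μ := by
        congr 1; funext x; exact hrw x
    _ = Real.exp (-Real.log (g αs)) * ∫ x, -(F' αs x) ∂μ := MeasureTheory.integral_const_mul _ _
    _ = Real.exp (-Real.log (g αs)) * -(∫ x, F' αs x ∂μ) := by rw [integral_neg]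
    _ = 0 := by rw [hI0]; ring
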